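/- Let C = ⟨Ω, {E_C, E_A, E_R}, f⟩ be a generalized choice structure satisfying: for every E ∈ E (where E = E_C ∪ E_A ∪ E_R), (1) if E ∩ f(Ω) ≠ ∅ then (a) if E ∈ E_C then f(E) = E ∩ f(Ω) and (b) if E ∈ E_A then f(E) = f(Ω), and (2) if E ∩ f(Ω) = ∅ and E ∈ E_A then f(E) = f(Ω) ∪ E′ for some nonempty E′ ⊆ E. Then C is basic-AGM consistent, i.e., for every model of C, the associated partial belief revision function B_{K,Ψ} can be extended to a full-domain function B°_K : Φ → 2^Φ that is representable via some basic AGM belief revision function B*_K as: B°_K(φ) = K if φ ∈ Φ_R, B°_K(φ) = B*_K(φ) if φ ∈ Φ_C, and B°_K(φ) = K ∩ B*_K(φ) if φ ∈ Φ_A. -/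

import Mathlib

/-! Propositional language built from a set of atomic formulas via negation and disjunction. -/

inductive PropForm (α : Type) : Type
  | atom : α → PropForm α
  | neg : PropForm α → PropForm α
  | or : PropForm α → PropForm α → PropForm α

namespace PropForm

/-- Truth value of a formula under a boolean valuation of the atoms. -/
def eval (v : α → Bool) : PropForm α → Bool
  | atom a => v a
  | neg φ => !(eval v φ)
  | or φ ψ => (eval v φ) || (eval v ψ)

/-- Conjunction, defined from negation and disjunction. -/
def and (φ ψ : PropForm α) : PropForm α := neg (or (neg φ) (neg ψ))

/-- Material implication. -/
def imp (φ ψ : PropForm α) : PropForm α := or (neg φ) ψ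

/-- Biconditional. -/
def biimp (φ ψ : PropForm α) : PropForm α := and (imp φ ψ) (imp ψ φ)

/-- A formula is a tautology if it is true under every boolean valuation. -/
def Tautology (φ : PropForm α) : Prop := ∀ v : α → Bool, eval v φ = true

/-- A formula is a contradiction if it is false under every boolean valuation. -/
def Contradiction (φ : PropForm α) : Prop := ∀ v : α → Bool, eval v φ = false

end PropForm

open PropForm

/-- The PL-deductive closure of `F`: ψ ∈ [F]^PL iff there are φ₁,…,φₙ ∈ F (n ≥ 0) such that
(φ₁ ∧ … ∧ φₙ) → ψ is a tautology (stated via the equivalent curried implication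
φ₁ → (φ₂ → ⋯ → ψ)). -/
def Cn (F : Set (PropForm α)) : Set (PropForm α) :=
  {ψ | ∃ l : List (PropForm α), (∀ φ ∈ l, φ ∈ F) ∧ Tautology (l.foldr PropForm.imp ψ)}

/-- A set of formulas is consistent if its deductive closure is not the set of all formulas. -/
def ConsistentSet (F : Set (PropForm α)) : Prop := Cn F ≠ Set.univ

/-- A set of formulas is deductively closed if it equals its own deductive closure. -/
def DedClosed (F : Set (PropForm α)) : Prop := F = Cn F

/-- A credibility partition of the set of formulas into credible (ΦC), allowable (ΦA) and
rejected (ΦR) formulas. -/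
structure CredPartition (ΦC ΦA ΦR : Set (PropForm α)) : Prop where
  disjCA : Disjoint ΦC ΦA
  disjCR : Disjoint ΦC ΦR
  disjAR : Disjoint ΦA ΦR
  cover : ΦC ∪ ΦA ∪ ΦR = Set.univ
  taut_mem_C : ∀ φ : PropForm α, Tautology φ → φ ∈ ΦC
  C_consistent : ∀ φ ∈ ΦC, ¬ Contradiction φ
  C_equiv_closed : ∀ φ ψ : PropForm α, Tautology (φ.biimp ψ) → φ ∈ ΦC → ψ ∈ ΦC
  A_consistent : ∀ φ ∈ ΦA, ¬ Contradiction φ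
  A_equiv_closed : ∀ φ ψ : PropForm α, Tautology (φ.biimp ψ) → φ ∈ ΦA → ψ ∈ ΦA
  contra_mem_R : ∀ φ : PropForm α, Contradiction φ → φ ∈ ΦR

/-- Basic AGM belief revision function based on K: postulates AGM1–AGM6. -/
structure IsBasicAGM (K : Set (PropForm α)) (B : PropForm α → Set (PropForm α)) : Prop where
  agm1 : ∀ φ : PropForm α, B φ = Cn (B φ)
  agm2 : ∀ φ : PropForm α, φ ∈ B φ
  agm3 : ∀ φ : PropForm α, B φ ⊆ Cn (K ∪ {φ})
  agm4 : ∀ φ : PropForm α, φ.neg ∉ K → Cn (K ∪ {φ}) ⊆ B φ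
  agm5 : ∀ φ : PropForm α, B φ = Set.univ ↔ Contradiction φ
  agm6 : ∀ φ ψ : PropForm α, Tautology (φ.biimp ψ) → B φ = B ψ

/-- Filtered belief revision function based on K, relative to a credibility partition. -/
structure IsFiltered (ΦC ΦA ΦR K : Set (PropForm α))
    (B : PropForm α → Set (PropForm α)) : Prop where
  f1 : ∀ φ ∈ ΦR, B φ = K
  f2a : ∀ φ : PropForm α, φ.neg ∉ K → φ ∈ ΦC → B φ = Cn (K ∪ {φ})
  f2b : ∀ φ : PropForm α, φ.neg ∉ K → φ ∈ ΦA → B φ = K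
  f3 : ∀ φ : PropForm α, φ.neg ∈ K → ConsistentSet (B φ) ∧ DedClosed (B φ)
  f3a : ∀ φ : PropForm α, φ.neg ∈ K → φ ∈ ΦC → φ ∈ B φ
  f3b : ∀ φ : PropForm α, φ.neg ∈ K → φ ∈ ΦA →
    B φ ⊆ K \ {φ.neg} ∧ Cn (B φ ∪ {φ.neg}) = K
  f4 : ∀ φ ψ : PropForm α, Tautology (φ.biimp ψ) → B φ = B ψ

/-! Generalized choice structures and their models. -/

/-- A generalized choice structure ⟨Ω, {EC, EA, ER}, f⟩. The function `f` is total on `Set Ω`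
but is only constrained on the events in `EC ∪ EA ∪ ER`. -/
structure GCS (Ω : Type) : Type where
  EC : Set (Set Ω)
  EA : Set (Set Ω)
  ER : Set (Set Ω)
  f : Set Ω → Set Ω
  omega_nonempty : Nonempty Ω
  disjCA : Disjoint EC EA
  disjCR : Disjoint EC ER
  disjAR : Disjoint EA ER
  univ_mem_C : (Set.univ : Set Ω) ∈ EC
  empty_mem_R : (∅ : Set Ω) ∈ ER
  f_univ_nonempty : (f Set.univ).Nonempty
  f_R : ∀ E ∈ ER, f E = f Set.univ
  f_C : ∀ E ∈ EC, (f E).Nonempty ∧ f E ⊆ E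
  f_A : ∀ E ∈ EA, (f E ∩ E).Nonempty

/-- The collection of all events (possible items of information) of a GCS. -/
def GCS.events {Ω : Type} (C : GCS Ω) : Set (Set Ω) := C.EC ∪ C.EA ∪ C.ER

/-- The truth set ||φ|| ⊆ Ω of a formula, given a valuation V : A → 2^Ω. -/
def truthSet {Ω α : Type} (V : α → Set Ω) : PropForm α → Set Ω
  | .atom p => V p
  | .neg φ => (truthSet V φ)ᶜ
  | .or φ ψ => truthSet V φ ∪ truthSet V ψ

/-- A model (interpretation) of a GCS: a credibility partition together with a valuation
such that events in EC (resp. EA, ER) are truth sets only of credible (resp. allowable,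
rejected) formulas. -/
structure IsGCSModel {Ω α : Type} (C : GCS Ω) (ΦC ΦA ΦR : Set (PropForm α))
    (V : α → Set Ω) : Prop where
  credPartition : CredPartition ΦC ΦA ΦR
  memC : ∀ φ : PropForm α, truthSet V φ ∈ C.EC → φ ∈ ΦC
  memA : ∀ φ : PropForm α, truthSet V φ ∈ C.EA → φ ∈ ΦA
  memR : ∀ φ : PropForm α, truthSet V φ ∈ C.ER → φ ∈ ΦR

/-- The initial belief set K = {φ : f(Ω) ⊆ ||φ||} determined by a GCS and a valuation. -/
def gcsK {Ω α : Type} (C : GCS Ω) (V : α → Set Ω) : Set (PropForm α) :=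
  {φ | C.f Set.univ ⊆ truthSet V φ}

/-- The set Ψ = {φ : ||φ|| ∈ E} of formulas that are potential items of information. -/
def gcsPsi {Ω α : Type} (C : GCS Ω) (V : α → Set Ω) : Set (PropForm α) :=
  {φ | truthSet V φ ∈ C.events}

/-- The partial belief revision function B_{K,Ψ}(φ) = {ψ : f(||φ||) ⊆ ||ψ||} (to be used
only on formulas in Ψ). -/
def gcsB {Ω α : Type} (C : GCS Ω) (V : α → Set Ω) (φ : PropForm α) : Set (PropForm α) :=
  {ψ | C.f (truthSet V φ) ⊆ truthSet V ψ}

/-- Basic-AGM consistency of a GCS (relative to the propositional language over atoms α):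
for every model there is a full-domain extension Bo of the partial belief revision function
and a basic AGM belief revision function Bs based on K such that Bo is obtained from Bs by
filtering through the credibility partition. -/
def BasicAGMConsistent (α : Type) {Ω : Type} (C : GCS Ω) : Prop :=
  ∀ (ΦC ΦA ΦR : Set (PropForm α)) (V : α → Set Ω),
    IsGCSModel C ΦC ΦA ΦR V →
      ∃ Bo Bs : PropForm α → Set (PropForm α),
        (∀ φ ∈ gcsPsi C V, Bo φ = gcsB C V φ) ∧
        IsBasicAGM (gcsK C V) Bs ∧
        ∀ φ : PropForm α,
          (φ ∈ ΦR → Bo φ = gcsK C V) ∧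
          (φ ∈ ΦC → Bo φ = Bs φ) ∧
          (φ ∈ ΦA → Bo φ = gcsK C V ∩ Bs φ)

/-- Condition (B) of Proposition 2: the semantic characterization of basic-AGM consistency. -/
def GCSCondB {Ω : Type} (C : GCS Ω) : Prop :=
  ∀ E ∈ C.events,
    ((E ∩ C.f Set.univ).Nonempty →
      (E ∈ C.EC → C.f E = E ∩ C.f Set.univ) ∧
      (E ∈ C.EA → C.f E = C.f Set.univ)) ∧
    (E ∩ C.f Set.univ = ∅ → E ∈ C.EA →
      ∃ E' : Set Ω, E'.Nonempty ∧ E' ⊆ E ∧ C.f E = C.f Set.univ ∪ E')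

section Helpers

open Classical PropForm

variable {Ω α : Type}

/-- Boolean valuation induced by a state ω. -/
noncomputable def valAt (V : α → Set Ω) (ω : Ω) : α → Bool :=
  fun a => if ω ∈ V a then true else false

lemma eval_valAt_iff (V : α → Set Ω) (ω : Ω) (φ : PropForm α) :
    eval (valAt V ω) φ = true ↔ ω ∈ truthSet V φ := by
  induction φ with
  | atom a => simp [eval, valAt, truthSet]
  | neg φ ih =>
    show (!eval (valAt V ω) φ) = true ↔ ω ∈ (truthSet V φ)ᶜ
    rw [Bool.not_eq_true', Set.mem_compl_iff, ← ih]
    cases eval (valAt V ω) φ <;> simp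
  | or φ ψ ih1 ih2 => simp [eval, truthSet, ih1, ih2]

lemma eval_foldr {v : α → Bool} {l : List (PropForm α)} {ψ : PropForm α}
    (h : eval v (l.foldr PropForm.imp ψ) = true)
    (hl : ∀ φ ∈ l, eval v φ = true) : eval v ψ = true := by
  induction l with
  | nil => exact h
  | cons a l ih =>
    have ha := hl a (by simp)
    simp [PropForm.imp, eval, ha] at h
    exact ih h (fun φ hφ => hl φ (by simp [hφ]))

/-- The theory of a set of boolean valuations. -/
def ThV (Vs : Set (α → Bool)) : Set (PropForm α) :=
  {ψ | ∀ v ∈ Vs, eval v ψ = true}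

lemma setOf_subset_eq_ThV (V : α → Set Ω) (S : Set Ω) :
    {ψ : PropForm α | S ⊆ truthSet V ψ} = ThV (valAt V '' S) := by
  ext ψ
  constructor
  · rintro h v ⟨ω, hω, rfl⟩
    exact (eval_valAt_iff V ω ψ).2 (h hω)
  · intro h ω hω
    exact (eval_valAt_iff V ω ψ).1 (h _ ⟨ω, hω, rfl⟩)

lemma subset_Cn (F : Set (PropForm α)) : F ⊆ Cn F := by
  intro ψ hψ
  refine ⟨[ψ], by simpa using hψ, ?_⟩
  intro v
  simp only [List.foldr, PropForm.imp, eval]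
  cases eval v ψ <;> simp

lemma Cn_ThV (Vs : Set (α → Bool)) : Cn (ThV Vs) = ThV Vs := by
  apply Set.Subset.antisymm _ (subset_Cn _)
  rintro ψ ⟨l, hl, ht⟩ v hv
  exact eval_foldr (ht v) (fun φ hφ => hl φ hφ v hv)

lemma ThV_mono {Vs Ws : Set (α → Bool)} (h : Vs ⊆ Ws) : ThV Ws ⊆ ThV Vs :=
  fun ψ hψ v hv => hψ v (h hv)

lemma ThV_union (Vs Ws : Set (α → Bool)) : ThV (Vs ∪ Ws) = ThV Vs ∩ ThV Ws := by
  ext ψ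
  constructor
  · intro h
    exact ⟨fun v hv => h v (Or.inl hv), fun v hv => h v (Or.inr hv)⟩
  · rintro ⟨h1, h2⟩ v (hv | hv)
    · exact h1 v hv
    · exact h2 v hv

lemma ThV_empty : ThV (∅ : Set (α → Bool)) = (Set.univ : Set (PropForm α)) := by
  ext ψ; simp [ThV]

lemma ThV_ne_univ [Nonempty α] {Vs : Set (α → Bool)} (h : Vs.Nonempty) :
    ThV Vs ≠ (Set.univ : Set (PropForm α)) := by
  intro hu
  obtain ⟨v, hv⟩ := h
  set a := Classical.arbitrary α
  have hbad : PropForm.and (PropForm.atom a) (PropForm.neg (PropForm.atom a)) ∈ ThV Vs := by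
    rw [hu]; trivial
  have := hbad v hv
  simp only [PropForm.and, eval] at this
  cases v a <;> simp_all

lemma mem_ThV_of_subset {V : α → Set Ω} {S : Set Ω} {φ : PropForm α}
    (h : S ⊆ truthSet V φ) : φ ∈ ThV (valAt V '' S) := by
  rw [← setOf_subset_eq_ThV]; exact h

lemma contradiction_truthSet {V : α → Set Ω} {φ : PropForm α} (h : Contradiction φ) :
    truthSet V φ = ∅ := by
  ext ω
  simp only [Set.mem_empty_iff_false, iff_false]
  intro hω
  have := (eval_valAt_iff V ω φ).2 hω
  rw [h] at this
  exact Bool.false_ne_true this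

lemma taut_biimp_eval {φ ψ : PropForm α} (h : Tautology (φ.biimp ψ)) (v : α → Bool) :
    eval v φ = eval v ψ := by
  have := h v
  simp only [PropForm.biimp, PropForm.and, PropForm.imp, eval] at this
  cases hφ : eval v φ <;> cases hψ : eval v ψ <;> simp_all

lemma taut_biimp_truthSet {V : α → Set Ω} {φ ψ : PropForm α} (h : Tautology (φ.biimp ψ)) :
    truthSet V φ = truthSet V ψ := by
  ext ω
  rw [← eval_valAt_iff, ← eval_valAt_iff, taut_biimp_eval h]

lemma CnK_eq (C : GCS Ω) (V : α → Set Ω) (φ : PropForm α) :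
    Cn (gcsK C V ∪ {φ}) = {ψ | C.f Set.univ ∩ truthSet V φ ⊆ truthSet V ψ} := by
  ext ψ
  constructor
  · rintro ⟨l, hl, ht⟩ ω ⟨hω1, hω2⟩
    rw [← eval_valAt_iff]
    refine eval_foldr (ht (valAt V ω)) ?_
    intro χ hχ
    rcases hl χ hχ with hK | hφ
    · exact (eval_valAt_iff V ω χ).2 (hK hω1)
    · rw [Set.mem_singleton_iff] at hφ
      subst hφ
      exact (eval_valAt_iff V ω χ).2 hω2
  · intro h
    refine ⟨[φ.imp ψ, φ], ?_, ?_⟩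
    · intro χ hχ
      simp only [List.mem_cons, List.not_mem_nil, or_false] at hχ
      rcases hχ with rfl | rfl
      · left
        intro ω hω
        show ω ∈ (truthSet V φ)ᶜ ∪ truthSet V ψ
        by_cases hφ : ω ∈ truthSet V φ
        · exact Or.inr (h ⟨hω, hφ⟩)
        · exact Or.inl hφ
      · right; rfl
    · intro v
      simp only [List.foldr, PropForm.imp, eval]
      cases eval v φ <;> cases eval v ψ <;> simp

open Classical in
/-- The AGM belief revision function constructed from a GCS + valuation. -/
noncomputable def BsDef (C : GCS Ω) (V : α → Set Ω) (φ : PropForm α) : Set (PropForm α) :=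
  if Contradiction φ then Set.univ
  else if (C.f Set.univ ∩ truthSet V φ).Nonempty then
    ThV (valAt V '' (C.f Set.univ ∩ truthSet V φ))
  else if truthSet V φ ∈ C.EC then ThV (valAt V '' C.f (truthSet V φ))
  else if truthSet V φ ∈ C.EA then ThV (valAt V '' (C.f (truthSet V φ) ∩ truthSet V φ))
  else ThV {v | eval v φ = true}

end Helpers
open Classical in
/-- Proposition 2, (B) ⇒ (A): a generalized choice structure satisfying the
semantic conditions (B) is basic-AGM consistent. -/
theorem gcs_condB_to_basicAGMConsistent {Ω α : Type} [Countable α] [Nonempty α]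
    (C : GCS Ω) (hB : GCSCondB C) :
    BasicAGMConsistent α C := by
  classical
  intro ΦC ΦA ΦR V hM
  have hK : gcsK C V = ThV (valAt V '' C.f Set.univ) := setOf_subset_eq_ThV V _
  have hgB : ∀ φ, gcsB C V φ = ThV (valAt V '' C.f (truthSet V φ)) :=
    fun φ => setOf_subset_eq_ThV V _
  refine ⟨fun φ => if φ ∈ ΦR then gcsK C V else if φ ∈ ΦC then BsDef C V φ
            else gcsK C V ∩ BsDef C V φ, BsDef C V, ?_, ?_, ?_⟩
  · -- extension of B_{K,Ψ} on Ψ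
    intro φ hφ
    have hev : truthSet V φ ∈ C.EC ∪ C.EA ∪ C.ER := hφ
    rcases hev with (hEC | hEA) | hER
    · -- EC case
      have hC := hM.memC φ hEC
      have hnR : φ ∉ ΦR := Set.disjoint_left.mp hM.credPartition.disjCR hC
      have hncon : ¬ Contradiction φ := hM.credPartition.C_consistent φ hC
      simp only [if_neg hnR, if_pos hC]
      rw [BsDef, if_neg hncon, hgB]
      by_cases hne : (C.f Set.univ ∩ truthSet V φ).Nonempty
      · have hne' : (truthSet V φ ∩ C.f Set.univ).Nonempty := by rwa [Set.inter_comm]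
        rw [if_pos hne]
        have hf := ((hB _ (Or.inl (Or.inl hEC))).1 hne').1 hEC
        rw [hf, Set.inter_comm]
      · rw [if_neg hne, if_pos hEC]
    · -- EA case
      have hA := hM.memA φ hEA
      have hnR : φ ∉ ΦR := Set.disjoint_left.mp hM.credPartition.disjAR hA
      have hnC : φ ∉ ΦC := Set.disjoint_right.mp hM.credPartition.disjCA hA
      have hncon : ¬ Contradiction φ := hM.credPartition.A_consistent φ hA
      simp only [if_neg hnR, if_neg hnC]
      rw [BsDef, if_neg hncon, hgB, hK]
      by_cases hne : (C.f Set.univ ∩ truthSet V φ).Nonempty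
      · have hne' : (truthSet V φ ∩ C.f Set.univ).Nonempty := by rwa [Set.inter_comm]
        rw [if_pos hne]
        have hf := ((hB _ (Or.inl (Or.inr hEA))).1 hne').2 hEA
        rw [hf]
        exact Set.inter_eq_left.mpr (ThV_mono (Set.image_mono Set.inter_subset_left))
      · have hEnC : truthSet V φ ∉ C.EC := Set.disjoint_right.mp C.disjCA hEA
        rw [if_neg hne, if_neg hEnC, if_pos hEA]
        have hemp : truthSet V φ ∩ C.f Set.univ = ∅ := by
          rw [Set.inter_comm]; exact Set.not_nonempty_iff_eq_empty.mp hne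
        obtain ⟨E', hE'ne, hE'sub, hfE⟩ := (hB _ (Or.inl (Or.inr hEA))).2 hemp hEA
        have h1 : C.f (truthSet V φ) ∩ truthSet V φ = E' := by
          rw [hfE, Set.union_inter_distrib_right, Set.inter_comm (C.f Set.univ), hemp,
            Set.empty_union]
          exact Set.inter_eq_left.mpr hE'sub
        rw [h1, hfE, Set.image_union, ThV_union]
    · -- ER case
      have hR := hM.memR φ hER
      simp only [if_pos hR]
      show gcsK C V = gcsB C V φ
      simp only [gcsK, gcsB, C.f_R _ hER]
  · -- Bs is a basic AGM revision function
    constructor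
    · -- AGM1
      intro φ
      rw [BsDef]
      split_ifs with h1 h2 h3 h4
      · exact (Set.Subset.antisymm (subset_Cn _) (Set.subset_univ _))
      · exact (Cn_ThV _).symm
      · exact (Cn_ThV _).symm
      · exact (Cn_ThV _).symm
      · exact (Cn_ThV _).symm
    · -- AGM2
      intro φ
      rw [BsDef]
      split_ifs with h1 h2 h3 h4
      · trivial
      · exact mem_ThV_of_subset Set.inter_subset_right
      · exact mem_ThV_of_subset (C.f_C _ h3).2
      · exact mem_ThV_of_subset Set.inter_subset_right
      · exact fun v hv => hv
    · -- AGM3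
      intro φ
      rw [CnK_eq, setOf_subset_eq_ThV]
      by_cases hne : (C.f Set.univ ∩ truthSet V φ).Nonempty
      · have hncon : ¬ Contradiction φ := by
          intro hc
          rw [contradiction_truthSet hc] at hne
          simp at hne
        rw [BsDef, if_neg hncon, if_pos hne]
      · rw [Set.not_nonempty_iff_eq_empty.mp hne, Set.image_empty, ThV_empty]
        exact Set.subset_univ _
    · -- AGM4
      intro φ hneg
      obtain ⟨ω, hω, hωφ⟩ : ∃ ω ∈ C.f Set.univ, ω ∈ truthSet V φ := by
        by_contra hcon
        push_neg at hcon
        exact hneg (fun ω hω => hcon ω hω)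
      have hne : (C.f Set.univ ∩ truthSet V φ).Nonempty := ⟨ω, hω, hωφ⟩
      have hncon : ¬ Contradiction φ := by
        intro hc
        rw [contradiction_truthSet hc] at hωφ
        exact hωφ
      rw [BsDef, if_neg hncon, if_pos hne, CnK_eq, setOf_subset_eq_ThV]
    · -- AGM5
      intro φ
      constructor
      · intro h
        by_contra hncon
        rw [BsDef, if_neg hncon] at h
        split_ifs at h with h2 h3 h4
        · exact ThV_ne_univ (h2.image _) h
        · exact ThV_ne_univ ((C.f_C _ h3).1.image _) h
        · have hemp : truthSet V φ ∩ C.f Set.univ = ∅ := by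
            rw [Set.inter_comm]; exact Set.not_nonempty_iff_eq_empty.mp h2
          obtain ⟨E', hE'ne, hE'sub, hfE⟩ := (hB _ (Or.inl (Or.inr h4))).2 hemp h4
          have hne' : (C.f (truthSet V φ) ∩ truthSet V φ).Nonempty := by
            obtain ⟨x, hx⟩ := hE'ne
            exact ⟨x, by rw [hfE]; exact Or.inr hx, hE'sub hx⟩
          exact ThV_ne_univ (hne'.image _) h
        · simp only [Contradiction] at hncon
          push_neg at hncon
          obtain ⟨v, hv⟩ := hncon
          have hv' : eval v φ = true := by
            cases hevφ : eval v φ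
            · exact absurd hevφ hv
            · rfl
          exact ThV_ne_univ ⟨v, hv'⟩ h
      · intro h
        rw [BsDef, if_pos h]
    · -- AGM6
      intro φ ψ ht
      have he := taut_biimp_eval ht
      have hts : truthSet V φ = truthSet V ψ := taut_biimp_truthSet ht
      have hc : Contradiction φ = Contradiction ψ := by
        apply propext
        constructor <;> intro h v
        · rw [← he v]; exact h v
        · rw [he v]; exact h v
      have hvs : {v : α → Bool | eval v φ = true} = {v | eval v ψ = true} := by
        ext v
        rw [Set.mem_setOf_eq, Set.mem_setOf_eq, he v]
      rw [BsDef, BsDef, hts, hc, hvs]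
  · -- the filtering conditions
    intro φ
    refine ⟨fun hR => by simp only [if_pos hR], fun hC => ?_, fun hA => ?_⟩
    · simp only [if_neg (Set.disjoint_left.mp hM.credPartition.disjCR hC), if_pos hC]
    · simp only [if_neg (Set.disjoint_left.mp hM.credPartition.disjAR hA),
        if_neg (Set.disjoint_right.mp hM.credPartition.disjCA hA)]
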